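/- For any real numbers γ, ε with 0 < γ < 1 and any weighted error r satisfying 0 ≤ r ≤ 1/2 − γ/2, if α = (1/2)·ln((1/2 + γ/2)/(1/2 − γ/2)), then r·exp(α) + (1 − r)·exp(−α) ≤ sqrt(1 − γ²). -/

import Mathlib

theorem stmt1 (γ ε r : ℝ) (hγ0 : 0 < γ) (hγ1 : γ < 1)
    (hr0 : 0 ≤ r) (hr1 : r ≤ 1/2 - γ/2)
    (α : ℝ) (hα : α = (1/2) * Real.log ((1/2 + γ/2) / (1/2 - γ/2))) :
    r * Real.exp α + (1 - r) * Real.exp (-α) ≤ Real.sqrt (1 - γ^2) := by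
  set a : ℝ := 1/2 + γ/2 with ha
  set b : ℝ := 1/2 - γ/2 with hb
  have hapos : 0 < a := by simp [ha]; linarith
  have hbpos : 0 < b := by simp [hb]; linarith
  have hdivpos : 0 < a / b := div_pos hapos hbpos
  have hs : Real.exp α = Real.sqrt (a / b) := by
    rw [hα, show (1/2 : ℝ) * Real.log (a/b) = Real.log (a/b) / 2 by ring,
      ← Real.log_sqrt hdivpos.le, Real.exp_log (Real.sqrt_pos.mpr hdivpos)]
  have hs' : Real.exp (-α) = Real.sqrt (b / a) := by
    rw [Real.exp_neg, hs, ← Real.sqrt_inv, inv_div]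
  have hsab : Real.sqrt (a/b) * Real.sqrt (b/a) = 1 := by
    rw [← Real.sqrt_mul hdivpos.le, div_mul_div_comm, mul_comm,
      div_self (by positivity), Real.sqrt_one]
  have hge : Real.sqrt (b/a) ≤ Real.sqrt (a/b) := by
    apply Real.sqrt_le_sqrt
    rw [div_le_div_iff₀ hapos hbpos]
    rw [ha, hb]; nlinarith
  have hkey : r * Real.sqrt (a/b) + (1 - r) * Real.sqrt (b/a)
      ≤ b * Real.sqrt (a/b) + a * Real.sqrt (b/a) := by
    have h1 : (1 : ℝ) - r = a + (b - r) := by simp [ha, hb]; ring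
    have heq : r * Real.sqrt (a/b) + (1 - r) * Real.sqrt (b/a)
        = b * Real.sqrt (a/b) + a * Real.sqrt (b/a)
          + (b - r) * (Real.sqrt (b/a) - Real.sqrt (a/b)) := by
      rw [h1]; ring
    have h2 : (b - r) * (Real.sqrt (b/a) - Real.sqrt (a/b)) ≤ 0 :=
      mul_nonpos_of_nonneg_of_nonpos (by linarith) (by linarith)
    linarith
  have hbs : b * Real.sqrt (a/b) = Real.sqrt (a * b) := by
    rw [← Real.sqrt_sq hbpos.le, ← Real.sqrt_mul (by positivity)]
    congr 1
    field_simp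
    rw [Real.sq_sqrt (sq_nonneg _)]
  have has : a * Real.sqrt (b/a) = Real.sqrt (a * b) := by
    rw [← Real.sqrt_sq hapos.le, ← Real.sqrt_mul (by positivity)]
    congr 1
    field_simp
    rw [Real.sq_sqrt (sq_nonneg _)]
  have hfin : b * Real.sqrt (a/b) + a * Real.sqrt (b/a) = Real.sqrt (1 - γ^2) := by
    have h4 : Real.sqrt (1 - γ^2) = 2 * Real.sqrt (a*b) := by
      rw [show (1:ℝ)-γ^2 = 2^2*(a*b) by rw [ha, hb]; ring,
        Real.sqrt_mul (by positivity : (0:ℝ) ≤ 2^2),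
        Real.sqrt_sq (by norm_num : (0:ℝ) ≤ 2)]
    rw [hbs, has, h4]; ring
  rw [hs, hs']
  calc r * Real.sqrt (a/b) + (1 - r) * Real.sqrt (b/a)
      ≤ b * Real.sqrt (a/b) + a * Real.sqrt (b/a) := hkey
    _ = Real.sqrt (1 - γ^2) := hfin
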